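/- For any unimodular lattice Λ ∈ X, any c > 0 and any T > r > 0, writing f_{r,c} = 𝟙_{E_{r,c}}, one has the sandwich inequality #(Λ ∩ (E_{T,c} ∖ E_{r,c})) ≤ (1/r)∫₀ᵀ f̂_{r,c}(g_t Λ) dt ≤ #(Λ ∩ E_{T+r,c}). Consequently (1/r)∫₀^{T−r} f̂_{r,c}(g_t Λ) dt ≤ #(E_{T,c}(Λ)) ≤ (1/r)∫₀ᵀ f̂_{r,c}(g_t Λ) dt + #(E_{r,c}(Λ)). -/

import Mathlib

/- Common setup: the Minkowski space `K_S` of a number field `K`, the homogeneous space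
`X = SL_d(K_S)/SL_d(𝒪)`, weighted quasi-norms, the sets `E_{T,c}`, Siegel transforms,
the diagonal flow `g_t`, the unipotents `u(ϑ)`, the function `α` and the class `C_α(X)`. -/

open MeasureTheory NumberField Matrix Filter Topology Set
open scoped ENNReal Classical

noncomputable section

namespace Paper

variable (K : Type) [Field K] [NumberField K]

/-- The Minkowski space `K_S ≅ ℝ^{r₁} × ℂ^{r₂}` of the number field `K`. -/
abbrev KS : Type :=
  ({w : InfinitePlace K // w.IsReal} → ℝ) × ({w : InfinitePlace K // w.IsComplex} → ℂ)

/-- The absolute value of the component of `z ∈ K_S` at the archimedean place `w`. -/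
def placeAbs (z : KS K) (w : InfinitePlace K) : ℝ :=
  if h : w.IsReal then |z.1 ⟨w, h⟩|
  else ‖z.2 ⟨w, NumberField.InfinitePlace.not_isReal_iff_isComplex.mp h⟩‖

variable {K}

/-- The weighted quasi-norm `‖x‖_a = max_{i,w} |x_{i,w}|^{1/a_{i,w}}` on `K_S^m`. -/
def wnorm {m : ℕ} (a : Fin m → InfinitePlace K → ℝ) (x : Fin m → KS K) : ℝ :=
  ⨆ i, ⨆ w, placeAbs K (x i) w ^ (1 / a i w)

/-- `a` is a weight vector: positive entries, and
`∑_{w real} ∑ᵢ a_{i,w} + 2 ∑_{w complex} ∑ᵢ a_{i,w} = 1`. -/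
def IsWeight {m : ℕ} (a : Fin m → InfinitePlace K → ℝ) : Prop :=
  (∀ i w, 0 < a i w) ∧
    ((∑ w : {w : InfinitePlace K // w.IsReal}, ∑ i, a i w.1) +
      2 * ∑ w : {w : InfinitePlace K // w.IsComplex}, ∑ i, a i w.1) = 1

/-- The standard Euclidean inner product on `K_S ≅ ℝ^k`. -/
def ksInner (z z' : KS K) : ℝ :=
  ∑ w, z.1 w * z'.1 w + ∑ w, (z.2 w * (starRingEnd ℂ) (z'.2 w)).re

/-- The standard Euclidean inner product on `K_S^ι ≅ ℝ^{|ι| k}`. -/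
def vinner {ι : Type} [Fintype ι] (v v' : ι → KS K) : ℝ := ∑ i, ksInner (v i) (v' i)

/-- The Euclidean norm on `K_S^ι ≅ ℝ^{|ι| k}`. -/
def enorm2 {ι : Type} [Fintype ι] (v : ι → KS K) : ℝ := Real.sqrt (vinner v v)

section mn
variable {m n : ℕ}

/-- The first `m` coordinates (the `x`-part) of a vector in `K_S^{m+n}`. -/
def xpart (z : (Fin m ⊕ Fin n) → KS K) : Fin m → KS K := fun i => z (Sum.inl i)

/-- The last `n` coordinates (the `y`-part) of a vector in `K_S^{m+n}`. -/
def ypart (z : (Fin m ⊕ Fin n) → KS K) : Fin n → KS K := fun j => z (Sum.inr j)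

/-- The set `E_{T,c} = {(x,y) ∈ K_S^m × K_S^n : ‖x‖_a ‖y‖_b < c, 1 ≤ ‖y‖_b < e^T}`. -/
def Eset (a : Fin m → InfinitePlace K → ℝ) (b : Fin n → InfinitePlace K → ℝ) (c T : ℝ) :
    Set ((Fin m ⊕ Fin n) → KS K) :=
  {z | wnorm a (xpart z) * wnorm b (ypart z) < c ∧
    1 ≤ wnorm b (ypart z) ∧ wnorm b (ypart z) < Real.exp T}

/-- The set `F_{r,c} = {(x,y) ∈ K_S^m × K_S^n : ‖x‖_a ‖y‖_b < c, 1 ≤ ‖x‖_a < e^r}`. -/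
def Fset (a : Fin m → InfinitePlace K → ℝ) (b : Fin n → InfinitePlace K → ℝ) (c r : ℝ) :
    Set ((Fin m ⊕ Fin n) → KS K) :=
  {z | wnorm a (xpart z) * wnorm b (ypart z) < c ∧
    1 ≤ wnorm a (xpart z) ∧ wnorm a (xpart z) < Real.exp r}

/-- The `a`-weighted flow `F_{at}` on `K_S^m`. -/
def flow (a : Fin m → InfinitePlace K → ℝ) (t : ℝ) (x : Fin m → KS K) : Fin m → KS K :=
  fun i => (fun w => Real.exp (a i w.1 * t) * (x i).1 w,
            fun w => (Real.exp (a i w.1 * t) : ℂ) * (x i).2 w)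

end mn

/-- The unit sphere `𝕊 = {x ∈ K_S^ι : ∑_{i,v} |x_{i,v}|² = 1}`. -/
def usphere {ι : Type} [Fintype ι] : Set (ι → KS K) := {x | vinner x x = 1}

/-- `π_a(x) ∈ A`: some (equivalently, the unique) point of the `F_{at}`-orbit of `x`
on the unit sphere lies in `A`. -/
def projIn {m : ℕ} (a : Fin m → InfinitePlace K → ℝ) (A : Set (Fin m → KS K))
    (x : Fin m → KS K) : Prop :=
  ∃ t : ℝ, flow a t x ∈ usphere ∧ flow a t x ∈ A

/-- The set `E_{T,c}(A,B)`. -/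
def EsetAB {m n : ℕ} (a : Fin m → InfinitePlace K → ℝ) (b : Fin n → InfinitePlace K → ℝ)
    (c T : ℝ) (A : Set (Fin m → KS K)) (B : Set (Fin n → KS K)) :
    Set ((Fin m ⊕ Fin n) → KS K) :=
  {z | z ∈ Eset a b c T ∧ projIn a A (xpart z) ∧ projIn b B (ypart z)}

/-- The cone (minus the origin) on a subset `A` of the unit sphere. -/
def cone {ι : Type} [Fintype ι] (A : Set (ι → KS K)) : Set (ι → KS K) :=
  {x | ∃ r : ℝ, 0 < r ∧ r ≤ 1 ∧ ∃ y ∈ A, x = r • y}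

/-- The standard probability measure of a subset `A` of the unit sphere, defined as the
normalized Lebesgue measure of the cone on `A`. -/
def sphVol {ι : Type} [Fintype ι] (A : Set (ι → KS K)) : ℝ≥0∞ :=
  volume (cone A) / volume (cone (usphere (K := K) (ι := ι)))

/-- The topological frontier of a subset `A` of the unit sphere, relative to the sphere. -/
def relFrontier {ι : Type} [Fintype ι] (A : Set (ι → KS K)) : Set (ι → KS K) :=
  closure A ∩ closure ((usphere (K := K) (ι := ι)) \ A)

variable (K)

/-- The Haar measure `λ` on `K_S`: the multiple `ϖ` of Lebesgue measure in each of the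
`k` real coordinates of `K_S ≅ ℝ^k`. -/
def lam (ϖ : ℝ) : Measure (KS K) :=
  (ENNReal.ofReal ϖ) ^ (Module.finrank ℚ K) • (volume : Measure (KS K))

/-- The Haar measure `λ` on `K_S^ι`: the product of copies of `lam K ϖ`. -/
def lamd (ι : Type) [Fintype ι] (ϖ : ℝ) : Measure (ι → KS K) :=
  (ENNReal.ofReal ϖ) ^ (Module.finrank ℚ K * Fintype.card ι) • (volume : Measure (ι → KS K))

/-- The embedding `ι_S : 𝒪 → K_S` of the ring of integers into the Minkowski space. -/
def intHom : 𝓞 K →+* KS K := (mixedEmbedding K).comp (algebraMap (𝓞 K) K)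

/-- The image `ι_S(𝒪)` of `𝒪` in `K_S`, as an additive subgroup. -/
def intLattice : AddSubgroup (KS K) := (intHom K).toAddMonoidHom.range

/-- `𝒪` has covolume one in `K_S` with respect to the measure `lam K ϖ`. -/
def covolOne (ϖ : ℝ) : Prop :=
  ∃ F : Set (KS K), IsAddFundamentalDomain (intLattice K) F (lam K ϖ) ∧ lam K ϖ F = 1

/-- `G = SL_d(K_S)`, with rows/columns indexed by `ι`. -/
abbrev SLd (ι : Type) [Fintype ι] [DecidableEq ι] : Type :=
  Matrix.SpecialLinearGroup ι (KS K)

variable (ι : Type) [Fintype ι] [DecidableEq ι]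

instance : TopologicalSpace (SLd K ι) :=
  TopologicalSpace.induced (fun g => (g : Matrix ι ι (KS K))) inferInstance

instance : MeasurableSpace (Matrix ι ι (KS K)) :=
  MeasurableSpace.pi (m := fun _ : ι => inferInstance)

instance : MeasurableSpace (SLd K ι) :=
  MeasurableSpace.comap (fun g => (g : Matrix ι ι (KS K))) inferInstance

/-- `Γ = SL_d(ι_S(𝒪))`, the image of `SL_d(𝒪)` in `G`. -/
def Gamma : Subgroup (SLd K ι) :=
  (Matrix.SpecialLinearGroup.map (n := ι) (intHom K)).range

/-- The homogeneous space `X = G/Γ`. -/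
abbrev XS : Type := SLd K ι ⧸ Gamma K ι

/-- The standard lattice `ι_S(𝒪)^d ⊆ K_S^d`. -/
def stdLat : Set (ι → KS K) := {v | ∃ w : ι → 𝓞 K, v = fun i => intHom K (w i)}

/-- The unimodular lattice in `K_S^d` corresponding to a point of `X = G/Γ`:
the orbit `g · ι_S(𝒪)^d` of the standard lattice under any representative `g` of `x`. -/
def latticeOf (x : XS K ι) : Set (ι → KS K) :=
  {v | ∃ g : SLd K ι, QuotientGroup.mk g = x ∧
    ∃ w ∈ stdLat K ι, v = Matrix.mulVec (g : Matrix ι ι (KS K)) w}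

/-- The Siegel transform `f̂(Λ) = ∑_{v ∈ Λ ∖ {0}} f(v)`. -/
def siegel (f : (ι → KS K) → ℝ) (x : XS K ι) : ℝ :=
  ∑' v : ↥(latticeOf K ι x \ {0}), f ↑v

/-- The open Euclidean ball of radius `r` about the origin in `K_S^ι ≅ ℝ^{|ι| k}`. -/
def Bset (r : ℝ) : Set (ι → KS K) := {v | enorm2 v < r}

/-- The open annulus `{v ∈ K_S^ι : s < ‖v‖₂ < r}`. -/
def annulus (s r : ℝ) : Set (ι → KS K) := {v | s < enorm2 v ∧ enorm2 v < r}

variable {K ι}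

/-- The function `α(Λ) = sup { d(Λ')⁻¹ : Λ' a subgroup of Λ }`: the supremum is over the
subgroups generated by linearly independent tuples of lattice vectors, whose covolume
`d(Λ')` in their real span is the square root of the Gram determinant. -/
def alpha (x : XS K ι) : ℝ :=
  ⨆ (j : ℕ) (v : Fin j → (ι → KS K)) (_ : ∀ i, v i ∈ latticeOf K ι x)
    (_ : LinearIndependent ℝ v),
    (Real.sqrt (Matrix.det (Matrix.of fun i i' => vinner (v i) (v i'))))⁻¹

/-- The class `C_α(X)`: functions continuous off a `μ`-null set whose growth is
majorized by `α`. -/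
def Calpha (μ : Measure (XS K ι)) : Set ((XS K ι) → ℝ) :=
  {φ | (∃ N : Set (XS K ι), μ N = 0 ∧ ∀ x ∉ N, ContinuousAt φ x) ∧
    ∃ C : ℝ, 0 < C ∧ ∀ x, |φ x| ≤ C * alpha x}

/-- Birkhoff genericity of `x ∈ X` for the flow `g` with respect to `φ`:
`(1/T) ∫₀ᵀ φ(g_t x) dt → ∫_X φ dμ` as `T → ∞`. -/
def IsGeneric (μ : Measure (XS K ι)) (g : ℝ → SLd K ι) (φ : XS K ι → ℝ) (x : XS K ι) : Prop :=
  Tendsto (fun T : ℝ => (1 / T) * ∫ t in (0:ℝ)..T, φ (g t • x)) atTop (𝓝 (∫ y, φ y ∂μ))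

variable {m n : ℕ}

/-- The diagonal one-parameter subgroup `g_t`, as a matrix. -/
def gtMat (a : Fin m → InfinitePlace K → ℝ) (b : Fin n → InfinitePlace K → ℝ) (t : ℝ) :
    Matrix (Fin m ⊕ Fin n) (Fin m ⊕ Fin n) (KS K) :=
  Matrix.diagonal (Sum.elim
    (fun i => ((fun w => Real.exp (a i w.1 * t)), (fun w => (Real.exp (a i w.1 * t) : ℂ))))
    (fun j => ((fun w => Real.exp (-(b j w.1) * t)), (fun w => (Real.exp (-(b j w.1) * t) : ℂ)))))

/-- `g_t` as an element of `SL_d(K_S)`, given that its determinant is one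
(which is the assertion `g_t ∈ G` of the paper). -/
def gtSL (a : Fin m → InfinitePlace K → ℝ) (b : Fin n → InfinitePlace K → ℝ)
    (hdet : ∀ t : ℝ, (gtMat a b t).det = 1) (t : ℝ) : SLd K (Fin m ⊕ Fin n) :=
  ⟨gtMat a b t, hdet t⟩

/-- `u(ϑ) = [[1_m, ϑ], [0, 1_n]]`, as an element of `SL_d(K_S)`. -/
def uSL (ϑ : Fin m → Fin n → KS K) : SLd K (Fin m ⊕ Fin n) :=
  ⟨Matrix.fromBlocks 1 (Matrix.of ϑ) 0 1, by
    rw [Matrix.det_fromBlocks_zero₂₁]; simp⟩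

variable (K m n)

/-- The underlying matrix of an element of `SL_{m+n}(K_S)`. -/
abbrev mat (g : SLd K (Fin m ⊕ Fin n)) : Matrix (Fin m ⊕ Fin n) (Fin m ⊕ Fin n) (KS K) := g

/-- The set `ℳ` of elements of `G` whose upper-left `m × m` block is invertible. -/
def Mset : Set (SLd K (Fin m ⊕ Fin n)) :=
  {g | IsUnit ((mat K m n g).toBlocks₁₁).det}

/-- The subgroup `ℋ` of block lower-triangular elements of `G`. -/
def Hsub : Subgroup (SLd K (Fin m ⊕ Fin n)) where
  carrier := {g | (mat K m n g).toBlocks₁₂ = 0}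
  one_mem' := by
    show (mat K m n 1).toBlocks₁₂ = 0
    rw [show mat K m n 1 = (1 : Matrix (Fin m ⊕ Fin n) (Fin m ⊕ Fin n) (KS K)) from rfl,
      ← Matrix.fromBlocks_one, Matrix.toBlocks_fromBlocks₁₂]
  mul_mem' := by
    intro a b ha hb
    have ha' : (mat K m n a).toBlocks₁₂ = 0 := ha
    have hb' : (mat K m n b).toBlocks₁₂ = 0 := hb
    have ha2 : Matrix.fromBlocks (mat K m n a).toBlocks₁₁ 0
        (mat K m n a).toBlocks₂₁ (mat K m n a).toBlocks₂₂ = mat K m n a := by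
      rw [← ha']; exact Matrix.fromBlocks_toBlocks _
    have hb2 : Matrix.fromBlocks (mat K m n b).toBlocks₁₁ 0
        (mat K m n b).toBlocks₂₁ (mat K m n b).toBlocks₂₂ = mat K m n b := by
      rw [← hb']; exact Matrix.fromBlocks_toBlocks _
    show (mat K m n (a * b)).toBlocks₁₂ = 0
    have : mat K m n (a * b) = mat K m n a * mat K m n b := rfl
    rw [this, ← ha2, ← hb2, Matrix.fromBlocks_multiply]
    simp
  inv_mem' := by
    intro g hg
    have hg' : (mat K m n g).toBlocks₁₂ = 0 := hg
    have hg2 : Matrix.fromBlocks (mat K m n g).toBlocks₁₁ 0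
        (mat K m n g).toBlocks₂₁ (mat K m n g).toBlocks₂₂ = mat K m n g := by
      rw [← hg']; exact Matrix.fromBlocks_toBlocks _
    set A := (mat K m n g).toBlocks₁₁ with hA
    have hdet : IsUnit A.det := by
      have h1 : (mat K m n g).det = 1 := g.prop
      rw [← hg2, Matrix.det_fromBlocks_zero₁₂] at h1
      exact ⟨⟨_, _, h1, by rw [mul_comm]; exact h1⟩, rfl⟩
    have hmul : mat K m n g * mat K m n g⁻¹ = 1 := by
      have : mat K m n (g * g⁻¹) = mat K m n g * mat K m n g⁻¹ := rfl
      rw [← this, mul_inv_cancel]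
      rfl
    have hBlock : A * (mat K m n g⁻¹).toBlocks₁₂ = 0 := by
      have h2 := congrArg Matrix.toBlocks₁₂ hmul
      rw [← hg2, ← Matrix.fromBlocks_toBlocks (mat K m n g⁻¹),
        Matrix.fromBlocks_multiply] at h2
      rw [← Matrix.fromBlocks_one, Matrix.toBlocks_fromBlocks₁₂] at h2
      have h3 : (1 : Matrix (Fin m ⊕ Fin n) (Fin m ⊕ Fin n) (KS K)).toBlocks₁₂ = 0 := by
        exact Matrix.ext fun i j => by
          simp only [Matrix.toBlocks₁₂, Matrix.of_apply, Matrix.zero_apply]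
          exact Matrix.one_apply_ne (by simp)
      simpa [h3] using h2
    show (mat K m n g⁻¹).toBlocks₁₂ = 0
    calc (mat K m n g⁻¹).toBlocks₁₂
        = A⁻¹ * (A * (mat K m n g⁻¹).toBlocks₁₂) := by
          rw [Matrix.nonsing_inv_mul_cancel_left _ _ hdet]
      _ = 0 := by rw [hBlock, Matrix.mul_zero]



section SandwichAux
set_option linter.unusedSectionVars false

variable {K : Type} [Field K] [NumberField K]

lemma placeAbs_nonneg' (z : KS K) (w : InfinitePlace K) : 0 ≤ placeAbs K z w := by
  unfold placeAbs
  by_cases h : w.IsReal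
  · rw [dif_pos h]; exact abs_nonneg _
  · rw [dif_neg h]; exact norm_nonneg _

lemma placeAbs_mul' (z z' : KS K) (w : InfinitePlace K) :
    placeAbs K (z * z') w = placeAbs K z w * placeAbs K z' w := by
  unfold placeAbs
  by_cases h : w.IsReal
  · rw [dif_pos h, dif_pos h, dif_pos h]
    show |(z.1 * z'.1) _| = _
    rw [Pi.mul_apply, abs_mul]
  · rw [dif_neg h, dif_neg h, dif_neg h]
    show ‖(z.2 * z'.2) _‖ = _
    rw [Pi.mul_apply, norm_mul]

lemma placeAbs_zero' (w : InfinitePlace K) : placeAbs K (0 : KS K) w = 0 := by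
  unfold placeAbs
  by_cases h : w.IsReal
  · rw [dif_pos h]; show |(0:ℝ)| = 0; simp
  · rw [dif_neg h]; show ‖(0:ℂ)‖ = 0; simp

lemma wnorm_nonneg' {m : ℕ} (a : Fin m → InfinitePlace K → ℝ) (x : Fin m → KS K) :
    0 ≤ wnorm a x :=
  Real.iSup_nonneg fun _ => Real.iSup_nonneg fun _ =>
    Real.rpow_nonneg (placeAbs_nonneg' _ _) _

lemma le_wnorm' {m : ℕ} (a : Fin m → InfinitePlace K → ℝ) (x : Fin m → KS K)
    (i : Fin m) (w : InfinitePlace K) :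
    placeAbs K (x i) w ^ (1 / a i w) ≤ wnorm a x := by
  have h1 : placeAbs K (x i) w ^ (1 / a i w) ≤ ⨆ w', placeAbs K (x i) w' ^ (1 / a i w') :=
    le_ciSup (f := fun w' => placeAbs K (x i) w' ^ (1 / a i w'))
      (Set.Finite.bddAbove (Set.finite_range _)) w
  exact h1.trans (le_ciSup (f := fun i' => ⨆ w', placeAbs K (x i') w' ^ (1 / a i' w'))
    (Set.Finite.bddAbove (Set.finite_range _)) i)

lemma wnorm_zero' {m : ℕ} (hm : 0 < m) (a : Fin m → InfinitePlace K → ℝ)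
    (ha : ∀ i w, 0 < a i w) : wnorm a (0 : Fin m → KS K) = 0 := by
  unfold wnorm
  have h : ∀ (i : Fin m) (w : InfinitePlace K),
      placeAbs K ((0 : Fin m → KS K) i) w ^ (1 / a i w) = 0 := by
    intro i w
    rw [Pi.zero_apply, placeAbs_zero', Real.zero_rpow (one_div_ne_zero (ha i w).ne')]
  haveI : Nonempty (Fin m) := ⟨⟨0, hm⟩⟩
  simp only [h, ciSup_const]

lemma weight_le_one {m : ℕ} {a : Fin m → InfinitePlace K → ℝ} (ha : IsWeight a)
    (i : Fin m) (w : InfinitePlace K) : a i w ≤ 1 := by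
  obtain ⟨hpos, hsum⟩ := ha
  have hS1 : (0:ℝ) ≤ ∑ w' : {w : InfinitePlace K // w.IsReal}, ∑ i', a i' w'.1 :=
    Finset.sum_nonneg fun _ _ => Finset.sum_nonneg fun _ _ => (hpos _ _).le
  have hS2 : (0:ℝ) ≤ ∑ w' : {w : InfinitePlace K // w.IsComplex}, ∑ i', a i' w'.1 :=
    Finset.sum_nonneg fun _ _ => Finset.sum_nonneg fun _ _ => (hpos _ _).le
  by_cases h : w.IsReal
  · have h1 : a i w ≤ ∑ i', a i' w := Finset.single_le_sum
      (fun i' _ => (hpos i' w).le) (Finset.mem_univ i)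
    have h2 : ∑ i', a i' w ≤ ∑ w' : {w : InfinitePlace K // w.IsReal}, ∑ i', a i' w'.1 := by
      have := Finset.single_le_sum
        (f := fun w' : {w : InfinitePlace K // w.IsReal} => ∑ i', a i' w'.1)
        (fun w' _ => Finset.sum_nonneg fun i' _ => (hpos i' w'.1).le)
        (Finset.mem_univ (⟨w, h⟩ : {w : InfinitePlace K // w.IsReal}))
      simpa using this
    linarith
  · have h' : w.IsComplex := NumberField.InfinitePlace.not_isReal_iff_isComplex.mp h
    have h1 : a i w ≤ ∑ i', a i' w := Finset.single_le_sum
      (fun i' _ => (hpos i' w).le) (Finset.mem_univ i)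
    have h2 : ∑ i', a i' w ≤ ∑ w' : {w : InfinitePlace K // w.IsComplex}, ∑ i', a i' w'.1 := by
      have := Finset.single_le_sum
        (f := fun w' : {w : InfinitePlace K // w.IsComplex} => ∑ i', a i' w'.1)
        (fun w' _ => Finset.sum_nonneg fun i' _ => (hpos i' w'.1).le)
        (Finset.mem_univ (⟨w, h'⟩ : {w : InfinitePlace K // w.IsComplex}))
      simpa using this
    linarith

lemma placeAbs_le_of_wnorm_le {m : ℕ} {a : Fin m → InfinitePlace K → ℝ} (ha : IsWeight a)
    {x : Fin m → KS K} {C : ℝ} (hC : 1 ≤ C) (h : wnorm a x ≤ C)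
    (i : Fin m) (w : InfinitePlace K) : placeAbs K (x i) w ≤ C := by
  have h0 := placeAbs_nonneg' (x i) w
  have h1 : placeAbs K (x i) w ^ (1 / a i w) ≤ C := (le_wnorm' a x i w).trans h
  have hpos := ha.1 i w
  have h2 : (placeAbs K (x i) w ^ (1 / a i w)) ^ a i w ≤ C ^ a i w :=
    Real.rpow_le_rpow (Real.rpow_nonneg h0 _) h1 hpos.le
  rw [← Real.rpow_mul h0, one_div_mul_cancel hpos.ne', Real.rpow_one] at h2
  refine h2.trans ?_
  calc C ^ a i w ≤ C ^ (1:ℝ) :=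
        Real.rpow_le_rpow_of_exponent_le hC (weight_le_one ha i w)
    _ = C := Real.rpow_one C

end SandwichAux
section SandwichAux2
set_option linter.unusedSectionVars false

variable {K : Type} [Field K] [NumberField K] {m n : ℕ}

lemma placeAbs_gt_inl (a : Fin m → InfinitePlace K → ℝ) (b : Fin n → InfinitePlace K → ℝ)
    (t : ℝ) (z : (Fin m ⊕ Fin n) → KS K) (i : Fin m) (w : InfinitePlace K) :
    placeAbs K ((gtMat a b t).mulVec z (Sum.inl i)) w
      = Real.exp (a i w * t) * placeAbs K (z (Sum.inl i)) w := by
  rw [gtMat, Matrix.mulVec_diagonal, Sum.elim_inl, placeAbs_mul']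
  congr 1
  unfold placeAbs
  by_cases h : w.IsReal
  · rw [dif_pos h]
    exact abs_of_pos (Real.exp_pos _)
  · rw [dif_neg h]
    rw [Complex.norm_real, Real.norm_eq_abs]
    exact abs_of_pos (Real.exp_pos _)

lemma placeAbs_gt_inr (a : Fin m → InfinitePlace K → ℝ) (b : Fin n → InfinitePlace K → ℝ)
    (t : ℝ) (z : (Fin m ⊕ Fin n) → KS K) (j : Fin n) (w : InfinitePlace K) :
    placeAbs K ((gtMat a b t).mulVec z (Sum.inr j)) w
      = Real.exp (-b j w * t) * placeAbs K (z (Sum.inr j)) w := by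
  rw [gtMat, Matrix.mulVec_diagonal, Sum.elim_inr, placeAbs_mul']
  congr 1
  unfold placeAbs
  by_cases h : w.IsReal
  · rw [dif_pos h]
    exact abs_of_pos (Real.exp_pos _)
  · rw [dif_neg h]
    rw [Complex.norm_real, Real.norm_eq_abs]
    exact abs_of_pos (Real.exp_pos _)

lemma wnorm_xpart_gt {a : Fin m → InfinitePlace K → ℝ} {b : Fin n → InfinitePlace K → ℝ}
    (hapos : ∀ i w, 0 < a i w) (t : ℝ) (z : (Fin m ⊕ Fin n) → KS K) :
    wnorm a (xpart ((gtMat a b t).mulVec z)) = Real.exp t * wnorm a (xpart z) := by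
  unfold wnorm
  rw [Real.mul_iSup_of_nonneg (Real.exp_nonneg t)]
  refine iSup_congr fun i => ?_
  rw [Real.mul_iSup_of_nonneg (Real.exp_nonneg t)]
  refine iSup_congr fun w => ?_
  show placeAbs K ((gtMat a b t).mulVec z (Sum.inl i)) w ^ (1 / a i w) = _
  rw [placeAbs_gt_inl, Real.mul_rpow (Real.exp_nonneg _) (placeAbs_nonneg' _ _),
    ← Real.exp_mul]
  have : a i w * t * (1 / a i w) = t := by
    field_simp
    rw [mul_comm, mul_div_assoc, div_self (hapos i w).ne', mul_one]
  rw [this]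
  rfl

lemma wnorm_ypart_gt {a : Fin m → InfinitePlace K → ℝ} {b : Fin n → InfinitePlace K → ℝ}
    (hbpos : ∀ j w, 0 < b j w) (t : ℝ) (z : (Fin m ⊕ Fin n) → KS K) :
    wnorm b (ypart ((gtMat a b t).mulVec z)) = Real.exp (-t) * wnorm b (ypart z) := by
  unfold wnorm
  rw [Real.mul_iSup_of_nonneg (Real.exp_nonneg (-t))]
  refine iSup_congr fun j => ?_
  rw [Real.mul_iSup_of_nonneg (Real.exp_nonneg (-t))]
  refine iSup_congr fun w => ?_
  show placeAbs K ((gtMat a b t).mulVec z (Sum.inr j)) w ^ (1 / b j w) = _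
  rw [placeAbs_gt_inr, Real.mul_rpow (Real.exp_nonneg _) (placeAbs_nonneg' _ _),
    ← Real.exp_mul]
  have : -b j w * t * (1 / b j w) = -t := by
    rw [neg_mul, neg_mul, neg_eq_iff_eq_neg, neg_neg, mul_one_div, mul_comm,
      mul_div_assoc, div_self (hbpos j w).ne', mul_one]
  rw [this]
  rfl

lemma mem_gt_Eset_iff {a : Fin m → InfinitePlace K → ℝ} {b : Fin n → InfinitePlace K → ℝ}
    (ha : IsWeight a) (hb : IsWeight b) (t c ρ : ℝ) (z : (Fin m ⊕ Fin n) → KS K) :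
    (gtMat a b t).mulVec z ∈ Eset a b c ρ ↔
      (wnorm a (xpart z) * wnorm b (ypart z) < c ∧
       1 ≤ Real.exp (-t) * wnorm b (ypart z) ∧
       Real.exp (-t) * wnorm b (ypart z) < Real.exp ρ) := by
  have hX := wnorm_xpart_gt (b := b) ha.1 t z
  have hY := wnorm_ypart_gt (a := a) hb.1 t z
  have hprod : Real.exp t * wnorm a (xpart z) * (Real.exp (-t) * wnorm b (ypart z))
      = wnorm a (xpart z) * wnorm b (ypart z) := by
    rw [Real.exp_neg]
    field_simp
  show (_ < c ∧ 1 ≤ _ ∧ _ < Real.exp ρ) ↔ _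
  rw [hX, hY, hprod]

end SandwichAux2
section SandwichAux3
set_option linter.unusedSectionVars false
set_option maxHeartbeats 1000000

variable {K : Type} [Field K] [NumberField K] {d : Type} [Fintype d] [DecidableEq d]

lemma quot_smul_mk (g h : SLd K d) :
    g • (QuotientGroup.mk h : XS K d) = QuotientGroup.mk (g * h) := rfl

lemma mulVec_sl_injective (g : SLd K d) :
    Function.Injective fun v : d → KS K => (g : Matrix d d (KS K)).mulVec v := by
  intro v v' h
  have hcan : ∀ u : d → KS K,
      ((g⁻¹ : SLd K d) : Matrix d d (KS K)).mulVec ((g : Matrix d d (KS K)).mulVec u) = u := by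
    intro u
    rw [Matrix.mulVec_mulVec, ← Matrix.SpecialLinearGroup.coe_mul, inv_mul_cancel,
      Matrix.SpecialLinearGroup.coe_one, Matrix.one_mulVec]
  have h2 := congrArg (fun u => ((g⁻¹ : SLd K d) : Matrix d d (KS K)).mulVec u) h
  simp only at h2
  rwa [hcan, hcan] at h2

lemma latticeOf_smul (g : SLd K d) (x : XS K d) :
    latticeOf K d (g • x) = (fun v => (g : Matrix d d (KS K)).mulVec v) '' latticeOf K d x := by
  ext v
  constructor
  · rintro ⟨h, hmk, w, hw, rfl⟩
    refine ⟨((g⁻¹ * h : SLd K d) : Matrix d d (KS K)).mulVec w,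
      ⟨g⁻¹ * h, ?_, w, hw, rfl⟩, ?_⟩
    · have : QuotientGroup.mk (g⁻¹ * h) = g⁻¹ • (QuotientGroup.mk h : XS K d) := rfl
      rw [this, hmk, inv_smul_smul]
    · show (g : Matrix d d (KS K)).mulVec _ = _
      rw [Matrix.mulVec_mulVec, ← Matrix.SpecialLinearGroup.coe_mul, mul_inv_cancel_left]
  · rintro ⟨v', ⟨h, hmk, w, hw, rfl⟩, rfl⟩
    refine ⟨g * h, ?_, w, hw, ?_⟩
    · rw [← hmk]; rfl
    · simp only [Matrix.mulVec_mulVec, Matrix.SpecialLinearGroup.coe_mul]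

lemma siegel_smul (g : SLd K d) (x : XS K d) (f : (d → KS K) → ℝ) :
    siegel K d f (g • x)
      = ∑' v : ↥(latticeOf K d x \ {0}), f ((g : Matrix d d (KS K)).mulVec ↑v) := by
  have hinj := mulVec_sl_injective g
  have himg : latticeOf K d (g • x) \ {0}
      = (fun v : d → KS K => (g : Matrix d d (KS K)).mulVec v) '' (latticeOf K d x \ {0}) := by
    rw [latticeOf_smul, Set.image_diff hinj]
    congr 1
    rw [Set.image_singleton]
    simp [Matrix.mulVec_zero]
  rw [siegel, himg]
  exact ((Equiv.Set.image _ _ hinj).tsum_eq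
    (fun v : ↥((fun v : d → KS K => (g : Matrix d d (KS K)).mulVec v) ''
      (latticeOf K d x \ {0})) => f ↑v)).symm

lemma mulVec_map_intHom (A : Matrix d d (𝓞 K)) (w : d → 𝓞 K) :
    (A.map (intHom K)).mulVec (fun i => intHom K (w i))
      = fun i => intHom K (A.mulVec w i) := by
  funext i
  simp only [Matrix.mulVec, dotProduct, Matrix.map_apply, map_sum, _root_.map_mul]

lemma latticeOf_subset_rep (g : SLd K d) :
    latticeOf K d (QuotientGroup.mk g)
      ⊆ (fun v : d → KS K => (g : Matrix d d (KS K)).mulVec v) '' stdLat K d := by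
  rintro v ⟨h, hmk, w, ⟨w0, rfl⟩, rfl⟩
  have hγ : g⁻¹ * h ∈ Gamma K d := by
    have := (QuotientGroup.eq (s := Gamma K d)).mp hmk.symm
    exact this
  obtain ⟨γ₀, hγ₀⟩ := hγ
  refine ⟨((g⁻¹ * h : SLd K d) : Matrix d d (KS K)).mulVec (fun i => intHom K (w0 i)),
    ?_, ?_⟩
  · rw [← hγ₀]
    have hcoe : ((Matrix.SpecialLinearGroup.map (n := d) (intHom K) γ₀ : SLd K d) :
        Matrix d d (KS K)) = (γ₀ : Matrix d d (𝓞 K)).map (intHom K) := by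
      simp [Matrix.SpecialLinearGroup.map_apply_coe, RingHom.mapMatrix_apply]
    rw [hcoe, mulVec_map_intHom]
    exact ⟨_, rfl⟩
  · show (g : Matrix d d (KS K)).mulVec _ = _
    rw [Matrix.mulVec_mulVec, ← Matrix.SpecialLinearGroup.coe_mul, mul_inv_cancel_left]

end SandwichAux3
section SandwichAux4
set_option linter.unusedSectionVars false
set_option maxHeartbeats 1000000
set_option synthInstance.maxHeartbeats 400000

variable {K : Type} [Field K] [NumberField K] {d : Type} [Fintype d] [DecidableEq d]

lemma intLattice_set_eq :
    (Set.range (intHom K) : Set (KS K)) = (mixedEmbedding.integerLattice K : Set (KS K)) := by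
  ext v
  simp only [Set.mem_range, SetLike.mem_coe, LinearMap.mem_range]
  constructor
  · rintro ⟨o, rfl⟩; exact ⟨o, rfl⟩
  · rintro ⟨o, rfl⟩; exact ⟨o, rfl⟩

lemma intLattice_discrete : DiscreteTopology (Set.range (intHom K)) := by
  rw [intLattice_set_eq]
  exact inferInstanceAs (DiscreteTopology (mixedEmbedding.integerLattice K))

lemma intLattice_closed : IsClosed (Set.range (intHom K) : Set (KS K)) := by
  rw [intLattice_set_eq]
  haveI : DiscreteTopology (mixedEmbedding.integerLattice K).toAddSubgroup :=
    inferInstanceAs (DiscreteTopology (mixedEmbedding.integerLattice K))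
  exact AddSubgroup.isClosed_of_discrete
    (H := (mixedEmbedding.integerLattice K).toAddSubgroup)

lemma intLattice_inter_finite (R : ℝ) :
    (Metric.closedBall (0 : KS K) R ∩ Set.range (intHom K)).Finite := by
  haveI := intLattice_discrete (K := K)
  exact Metric.finite_isBounded_inter_isClosed DiscreteTopology.isDiscrete Metric.isBounded_closedBall intLattice_closed

lemma latticeOf_inter_finite (x : XS K d) {M : Set (d → KS K)}
    (hM : Bornology.IsBounded M) : (latticeOf K d x ∩ M).Finite := by
  obtain ⟨g, rfl⟩ := QuotientGroup.mk_surjective x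
  obtain ⟨R, hR⟩ := hM.subset_closedBall 0
  set clm := LinearMap.toContinuousLinearMap
      ((Matrix.mulVecLin ((g⁻¹ : SLd K d) : Matrix d d (KS K))).restrictScalars ℝ)
    with hclm
  set R2 := ‖clm‖ * max R 0 with hR2
  have hcan : ∀ u : d → KS K,
      ((g⁻¹ : SLd K d) : Matrix d d (KS K)).mulVec ((g : Matrix d d (KS K)).mulVec u) = u := by
    intro u
    rw [Matrix.mulVec_mulVec, ← Matrix.SpecialLinearGroup.coe_mul, inv_mul_cancel,
      Matrix.SpecialLinearGroup.coe_one, Matrix.one_mulVec]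
  have key : latticeOf K d (QuotientGroup.mk g) ∩ M ⊆
      (fun v : d → KS K => (g : Matrix d d (KS K)).mulVec v) ''
        (Metric.closedBall 0 R2 ∩ stdLat K d) := by
    rintro v ⟨hv, hvM⟩
    obtain ⟨w, hw, rfl⟩ := latticeOf_subset_rep g hv
    refine ⟨w, ⟨?_, hw⟩, rfl⟩
    rw [Metric.mem_closedBall, dist_zero_right]
    have h1 : w = clm ((g : Matrix d d (KS K)).mulVec w) := by
      rw [hclm]
      show w = ((g⁻¹ : SLd K d) : Matrix d d (KS K)).mulVec ((g : Matrix d d (KS K)).mulVec w)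
      rw [hcan]
    rw [h1]
    calc ‖clm ((g : Matrix d d (KS K)).mulVec w)‖
        ≤ ‖clm‖ * ‖(g : Matrix d d (KS K)).mulVec w‖ := clm.le_opNorm _
      _ ≤ R2 := by
          apply mul_le_mul_of_nonneg_left _ (norm_nonneg clm)
          have h2 := hR hvM
          rw [Metric.mem_closedBall, dist_zero_right] at h2
          exact h2.trans (le_max_left _ _)
  refine Set.Finite.subset (Set.Finite.image _ ?_) key
  have hsub : Metric.closedBall (0 : d → KS K) R2 ∩ stdLat K d ⊆
      Set.pi Set.univ (fun _ : d => Metric.closedBall (0 : KS K) R2 ∩ Set.range (intHom K)) := by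
    rintro w ⟨hwB, w0, rfl⟩
    intro i _
    constructor
    · rw [Metric.mem_closedBall, dist_zero_right] at hwB ⊢
      exact (norm_le_pi_norm (fun i => intHom K (w0 i)) i).trans hwB
    · exact ⟨w0 i, rfl⟩
  exact Set.Finite.subset (Set.Finite.pi fun _ => intLattice_inter_finite R2) hsub

lemma ks_norm_le {z : KS K} {R : ℝ} (hR : 0 ≤ R) (h : ∀ w, placeAbs K z w ≤ R) : ‖z‖ ≤ R := by
  rw [Prod.norm_def]
  apply max_le
  · apply (pi_norm_le_iff_of_nonneg hR).2
    intro w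
    have hw := h w.1
    rw [placeAbs, dif_pos w.2] at hw
    rw [Real.norm_eq_abs]
    simpa using hw
  · apply (pi_norm_le_iff_of_nonneg hR).2
    intro w
    have hw := h w.1
    rw [placeAbs, dif_neg ((NumberField.InfinitePlace.not_isReal_iff_isComplex).mpr w.2)] at hw
    simpa using hw

lemma Eset_subset_ball {m n : ℕ} {a : Fin m → InfinitePlace K → ℝ}
    {b : Fin n → InfinitePlace K → ℝ} (ha : IsWeight a) (hb : IsWeight b)
    {c T' : ℝ} :
    Eset a b c T' ⊆ Metric.closedBall 0 (max (max c 1) (Real.exp T')) := by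
  intro z hz
  obtain ⟨h1, h2, h3⟩ := hz
  rw [Metric.mem_closedBall, dist_zero_right]
  set R := max (max c 1) (Real.exp T') with hRdef
  have hR1 : (1:ℝ) ≤ R := le_max_of_le_left (le_max_right _ _)
  have hR0 : (0:ℝ) ≤ R := zero_le_one.trans hR1
  apply (pi_norm_le_iff_of_nonneg hR0).2
  intro s
  apply ks_norm_le hR0
  intro w
  cases s with
  | inl i =>
      have hx : wnorm a (xpart z) ≤ R := by
        have hx0 := wnorm_nonneg' a (xpart z)
        have hy0 := wnorm_nonneg' b (ypart z)
        have hxc : wnorm a (xpart z) ≤ c := by nlinarith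
        exact hxc.trans ((le_max_left c 1).trans (le_max_left _ _))
      exact placeAbs_le_of_wnorm_le ha hR1 hx i w
  | inr j =>
      have hy : wnorm b (ypart z) ≤ R := h3.le.trans (le_max_right _ _)
      exact placeAbs_le_of_wnorm_le hb hR1 hy j w

lemma Eset_bounded {m n : ℕ} {a : Fin m → InfinitePlace K → ℝ}
    {b : Fin n → InfinitePlace K → ℝ} (ha : IsWeight a) (hb : IsWeight b)
    {c T' : ℝ} : Bornology.IsBounded (Eset a b c T') :=
  Metric.isBounded_closedBall.subset (Eset_subset_ball ha hb)

end SandwichAux4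
section SandwichCore
set_option linter.unusedSectionVars false
set_option maxHeartbeats 2000000
set_option synthInstance.maxHeartbeats 400000

variable {K : Type} [Field K] [NumberField K] {m n : ℕ}

lemma core_count (hm : 0 < m) (hn : 0 < n)
    (a : Fin m → InfinitePlace K → ℝ) (b : Fin n → InfinitePlace K → ℝ)
    (ha : IsWeight a) (hb : IsWeight b)
    (hdet : ∀ t : ℝ, (gtMat a b t).det = 1)
    (x : XS K (Fin m ⊕ Fin n)) (c r T' : ℝ) (hc : 0 < c) (hr : 0 < r) (hT' : 0 ≤ T') :
    ((Set.ncard (latticeOf K (Fin m ⊕ Fin n) x ∩ (Eset a b c T' \ Eset a b c r)) : ℝ) * r ≤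
      ∫ t in (0:ℝ)..T', siegel K (Fin m ⊕ Fin n)
        (Set.indicator (Eset a b c r) fun _ => (1:ℝ)) (gtSL a b hdet t • x)) ∧
    ((∫ t in (0:ℝ)..T', siegel K (Fin m ⊕ Fin n)
        (Set.indicator (Eset a b c r) fun _ => (1:ℝ)) (gtSL a b hdet t • x)) ≤
      (Set.ncard (latticeOf K (Fin m ⊕ Fin n) x ∩ Eset a b c (T' + r)) : ℝ) * r) := by
  set Λ := latticeOf K (Fin m ⊕ Fin n) x with hΛ
  set fE := Set.indicator (Eset a b c r) (fun _ => (1:ℝ)) with hfE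
  set V := Λ ∩ Eset a b c (T' + r) with hV
  have hVfin : V.Finite := latticeOf_inter_finite x (Eset_bounded ha hb)
  set Vs := hVfin.toFinset with hVs
  set ψ : ((Fin m ⊕ Fin n) → KS K) → ℝ → ℝ := fun v =>
    Set.indicator (Set.Ioc (Real.log (wnorm b (ypart v)) - r) (Real.log (wnorm b (ypart v))))
      (fun _ => (1:ℝ)) with hψ
  -- every element of V is a nonzero lattice vector
  have hV0 : ∀ v ∈ V, v ∈ Λ \ ({0} : Set _) := by
    intro v hv
    refine ⟨hv.1, ?_⟩
    intro h0
    rw [Set.mem_singleton_iff] at h0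
    have h1 : (1:ℝ) ≤ wnorm b (ypart v) := hv.2.2.1
    rw [h0] at h1
    have h2 : wnorm b (ypart (0 : (Fin m ⊕ Fin n) → KS K)) = 0 := by
      rw [show ypart (0 : (Fin m ⊕ Fin n) → KS K) = 0 from rfl, wnorm_zero' hn b hb.1]
    rw [h2] at h1
    linarith
  -- pointwise description of the Siegel transform along the flow
  have hsieg : ∀ t ∈ Set.Icc (0:ℝ) T',
      siegel K (Fin m ⊕ Fin n) fE (gtSL a b hdet t • x) = ∑ v ∈ Vs, ψ v t := by
    intro t ht
    rw [hfE, siegel_smul]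
    show (∑' v : ↥(Λ \ ({0} : Set _)),
      Set.indicator (Eset a b c r) (fun _ => (1:ℝ)) ((gtMat a b t).mulVec ↑v)) = _
    rw [tsum_subtype (Λ \ ({0} : Set _))
      (fun v => Set.indicator (Eset a b c r) (fun _ => (1:ℝ)) ((gtMat a b t).mulVec v))]
    have hsupp : ∀ v, v ∉ Vs → Set.indicator (Λ \ ({0} : Set _))
        (fun v => Set.indicator (Eset a b c r) (fun _ => (1:ℝ)) ((gtMat a b t).mulVec v)) v
          = 0 := by
      intro v hv
      by_cases hvΛ : v ∈ Λ \ ({0} : Set _)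
      · rw [Set.indicator_of_mem hvΛ]
        apply Set.indicator_of_notMem
        intro hmem
        apply hv
        rw [hVs, Set.Finite.mem_toFinset, hV]
        rw [mem_gt_Eset_iff ha hb] at hmem
        obtain ⟨h1, h2, h3⟩ := hmem
        have hkey : Real.exp t * (Real.exp (-t) * wnorm b (ypart v)) = wnorm b (ypart v) := by
          rw [← mul_assoc, ← Real.exp_add]
          simp
        refine ⟨hvΛ.1, h1, ?_, ?_⟩
        · have h4 : Real.exp t ≤ wnorm b (ypart v) := by nlinarith [Real.exp_pos t]
          have h5 : (1:ℝ) ≤ Real.exp t := by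
            rw [← Real.exp_zero]
            exact Real.exp_le_exp.mpr ht.1
          linarith
        · have h6 : Real.exp t * (Real.exp (-t) * wnorm b (ypart v))
              < Real.exp t * Real.exp r := by
            exact mul_lt_mul_of_pos_left h3 (Real.exp_pos t)
          rw [hkey, ← Real.exp_add] at h6
          refine h6.trans_le (Real.exp_le_exp.mpr ?_)
          linarith [ht.2]
      · exact Set.indicator_of_notMem hvΛ _
    rw [tsum_eq_sum hsupp]
    apply Finset.sum_congr rfl
    intro v hv
    rw [hVs, Set.Finite.mem_toFinset] at hv
    rw [Set.indicator_of_mem (hV0 v hv)]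
    have hNv : (1:ℝ) ≤ wnorm b (ypart v) := hv.2.2.1
    have hNpos : (0:ℝ) < wnorm b (ypart v) := zero_lt_one.trans_le hNv
    have hPv : wnorm a (xpart v) * wnorm b (ypart v) < c := hv.2.1
    rw [hψ]
    simp only [Set.indicator_apply]
    refine if_congr ?_ rfl rfl
    rw [mem_gt_Eset_iff ha hb]
    have e1 : (1 ≤ Real.exp (-t) * wnorm b (ypart v)) ↔ t ≤ Real.log (wnorm b (ypart v)) := by
      rw [Real.exp_neg, inv_mul_eq_div, one_le_div (Real.exp_pos t),
        Real.le_log_iff_exp_le hNpos]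
    have e2 : (Real.exp (-t) * wnorm b (ypart v) < Real.exp r)
        ↔ Real.log (wnorm b (ypart v)) - r < t := by
      rw [Real.exp_neg, inv_mul_eq_div, div_lt_iff₀ (Real.exp_pos t), ← Real.exp_add,
        ← Real.log_lt_iff_lt_exp hNpos, sub_lt_iff_lt_add']
    constructor
    · rintro ⟨-, h2, h3⟩
      exact ⟨e2.mp h3, e1.mp h2⟩
    · rintro ⟨h2, h3⟩
      exact ⟨hPv, e1.mpr h3, e2.mpr h2⟩
  -- integrability and value of the elementary integrals
  have hInt : ∀ v : (Fin m ⊕ Fin n) → KS K,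
      IntervalIntegrable (ψ v) MeasureTheory.volume 0 T' := by
    intro v
    apply MeasureTheory.Integrable.intervalIntegrable
    rw [hψ]
    rw [MeasureTheory.integrable_indicator_iff measurableSet_Ioc]
    exact MeasureTheory.integrableOn_const measure_Ioc_lt_top.ne
  have hIval : ∀ v : (Fin m ⊕ Fin n) → KS K, (∫ t in (0:ℝ)..T', ψ v t)
      = max ((min T' (Real.log (wnorm b (ypart v))))
          - (max 0 (Real.log (wnorm b (ypart v)) - r))) 0 := by
    intro v
    rw [hψ, intervalIntegral.integral_of_le hT',
      MeasureTheory.setIntegral_indicator measurableSet_Ioc,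
      MeasureTheory.setIntegral_const, smul_eq_mul, mul_one, Set.Ioc_inter_Ioc,
      Real.volume_real_Ioc]
  have hIle : ∀ v : (Fin m ⊕ Fin n) → KS K, (∫ t in (0:ℝ)..T', ψ v t) ≤ r := by
    intro v
    rw [hIval v]
    apply max_le _ hr.le
    have h1 := min_le_right T' (Real.log (wnorm b (ypart v)))
    have h2 := le_max_right (0:ℝ) (Real.log (wnorm b (ypart v)) - r)
    linarith
  have hInonneg : ∀ v : (Fin m ⊕ Fin n) → KS K, 0 ≤ ∫ t in (0:ℝ)..T', ψ v t := by
    intro v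
    rw [hIval v]
    exact le_max_right _ _
  -- the integral identity
  have hIeq : (∫ t in (0:ℝ)..T', siegel K (Fin m ⊕ Fin n) fE (gtSL a b hdet t • x))
      = ∑ v ∈ Vs, ∫ t in (0:ℝ)..T', ψ v t := by
    rw [intervalIntegral.integral_congr (g := fun t => ∑ v ∈ Vs, ψ v t) ?_]
    · exact intervalIntegral.integral_finset_sum fun v _ => hInt v
    · intro t ht
      rw [Set.uIcc_of_le hT'] at ht
      exact hsieg t ht
  -- the set W of "good" vectors
  set W := Λ ∩ (Eset a b c T' \ Eset a b c r) with hW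
  have hWfin : W.Finite :=
    latticeOf_inter_finite x ((Eset_bounded ha hb).subset Set.diff_subset)
  have hWV : W ⊆ V := by
    rintro v ⟨hvΛ, hvE, -⟩
    refine ⟨hvΛ, hvE.1, hvE.2.1, hvE.2.2.trans ?_⟩
    exact Real.exp_lt_exp.mpr (by linarith)
  have hWsVs : hWfin.toFinset ⊆ Vs := by
    rw [hVs]
    exact Set.Finite.toFinset_subset_toFinset.mpr hWV
  have hIeqr : ∀ v ∈ hWfin.toFinset, (∫ t in (0:ℝ)..T', ψ v t) = r := by
    intro v hv
    rw [Set.Finite.mem_toFinset] at hv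
    obtain ⟨hvΛ, hvE, hvnr⟩ := hv
    have hNv : (1:ℝ) ≤ wnorm b (ypart v) := hvE.2.1
    have hNpos : (0:ℝ) < wnorm b (ypart v) := zero_lt_one.trans_le hNv
    have hlogle : Real.log (wnorm b (ypart v)) ≤ T' :=
      ((Real.log_lt_iff_lt_exp hNpos).mpr hvE.2.2).le
    have hrle : r ≤ Real.log (wnorm b (ypart v)) := by
      have hge : Real.exp r ≤ wnorm b (ypart v) := by
        by_contra hlt
        exact hvnr ⟨hvE.1, hvE.2.1, not_le.mp hlt⟩
      exact (Real.le_log_iff_exp_le hNpos).mpr hge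
    rw [hIval v, min_eq_right hlogle,
      max_eq_right (show (0:ℝ) ≤ Real.log (wnorm b (ypart v)) - r by linarith),
      sub_sub_cancel]
    exact max_eq_left hr.le
  constructor
  · -- lower bound
    have hcount : (Set.ncard W : ℝ) * r = ∑ v ∈ hWfin.toFinset, ∫ t in (0:ℝ)..T', ψ v t := by
      rw [Finset.sum_congr rfl hIeqr, Finset.sum_const, nsmul_eq_mul,
        Set.ncard_eq_toFinset_card W hWfin]
    rw [hIeq, hcount]
    exact Finset.sum_le_sum_of_subset_of_nonneg hWsVs fun v _ _ => hInonneg v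
  · -- upper bound
    rw [hIeq]
    calc (∑ v ∈ Vs, ∫ t in (0:ℝ)..T', ψ v t) ≤ ∑ _v ∈ Vs, r :=
          Finset.sum_le_sum fun v _ => hIle v
      _ = (Vs.card : ℝ) * r := by rw [Finset.sum_const, nsmul_eq_mul]
      _ = (Set.ncard V : ℝ) * r := by rw [Set.ncard_eq_toFinset_card V hVfin, hVs]

end SandwichCore

set_option maxHeartbeats 2000000
set_option synthInstance.maxHeartbeats 400000

/-- **The sandwich inequalities** relating lattice point counts in `E_{T,c}` to
Birkhoff integrals of the Siegel transform `f̂_{r,c}` of the indicator of `E_{r,c}`. -/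
theorem sandwich_inequalities (K : Type) [Field K] [NumberField K] (m n : ℕ) (hm : 0 < m) (hn : 0 < n)
    (a : Fin m → InfinitePlace K → ℝ) (b : Fin n → InfinitePlace K → ℝ)
    (ha : IsWeight a) (hb : IsWeight b)
    (hdet : ∀ t : ℝ, (gtMat a b t).det = 1)
    (x : XS K (Fin m ⊕ Fin n)) (c r T : ℝ) (hc : 0 < c) (hr : 0 < r) (hrT : r < T) :
    ((Set.ncard (latticeOf K (Fin m ⊕ Fin n) x ∩ (Eset a b c T \ Eset a b c r)) : ℝ) ≤
        (1 / r) * ∫ t in (0:ℝ)..T,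
          siegel K (Fin m ⊕ Fin n) (Set.indicator (Eset a b c r) fun _ => (1:ℝ))
            (gtSL a b hdet t • x)) ∧
    ((1 / r) * (∫ t in (0:ℝ)..T,
          siegel K (Fin m ⊕ Fin n) (Set.indicator (Eset a b c r) fun _ => (1:ℝ))
            (gtSL a b hdet t • x)) ≤
        (Set.ncard (latticeOf K (Fin m ⊕ Fin n) x ∩ Eset a b c (T + r)) : ℝ)) ∧
    ((1 / r) * (∫ t in (0:ℝ)..(T - r),
          siegel K (Fin m ⊕ Fin n) (Set.indicator (Eset a b c r) fun _ => (1:ℝ))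
            (gtSL a b hdet t • x)) ≤
        (Set.ncard (Eset a b c T ∩ latticeOf K (Fin m ⊕ Fin n) x) : ℝ)) ∧
    ((Set.ncard (Eset a b c T ∩ latticeOf K (Fin m ⊕ Fin n) x) : ℝ) ≤
        (1 / r) * (∫ t in (0:ℝ)..T,
          siegel K (Fin m ⊕ Fin n) (Set.indicator (Eset a b c r) fun _ => (1:ℝ))
            (gtSL a b hdet t • x)) +
        (Set.ncard (Eset a b c r ∩ latticeOf K (Fin m ⊕ Fin n) x) : ℝ)) := by
  have hT0 : (0:ℝ) ≤ T := (hr.trans hrT).le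
  have hTr0 : (0:ℝ) ≤ T - r := sub_nonneg.mpr hrT.le
  obtain ⟨hcore1, hcore2⟩ := core_count hm hn a b ha hb hdet x c r T hc hr hT0
  obtain ⟨-, hcore3⟩ := core_count hm hn a b ha hb hdet x c r (T - r) hc hr hTr0
  have h1 : ((Set.ncard (latticeOf K (Fin m ⊕ Fin n) x ∩ (Eset a b c T \ Eset a b c r)) : ℝ) ≤
      (1 / r) * ∫ t in (0:ℝ)..T,
        siegel K (Fin m ⊕ Fin n) (Set.indicator (Eset a b c r) fun _ => (1:ℝ))
          (gtSL a b hdet t • x)) := by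
    rw [one_div_mul_eq_div, le_div_iff₀ hr]
    exact hcore1
  have h2 : ((1 / r) * (∫ t in (0:ℝ)..T,
      siegel K (Fin m ⊕ Fin n) (Set.indicator (Eset a b c r) fun _ => (1:ℝ))
        (gtSL a b hdet t • x)) ≤
      (Set.ncard (latticeOf K (Fin m ⊕ Fin n) x ∩ Eset a b c (T + r)) : ℝ)) := by
    rw [one_div_mul_eq_div, div_le_iff₀ hr]
    exact hcore2
  have h3 : ((1 / r) * (∫ t in (0:ℝ)..(T - r),
      siegel K (Fin m ⊕ Fin n) (Set.indicator (Eset a b c r) fun _ => (1:ℝ))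
        (gtSL a b hdet t • x)) ≤
      (Set.ncard (Eset a b c T ∩ latticeOf K (Fin m ⊕ Fin n) x) : ℝ)) := by
    rw [one_div_mul_eq_div, div_le_iff₀ hr]
    rw [Set.inter_comm]
    have heq : T - r + r = T := by ring
    rw [heq] at hcore3
    exact hcore3
  refine ⟨h1, h2, h3, ?_⟩
  -- part 4
  have hsub : Eset a b c T ∩ latticeOf K (Fin m ⊕ Fin n) x ⊆
      (latticeOf K (Fin m ⊕ Fin n) x ∩ (Eset a b c T \ Eset a b c r)) ∪
        (Eset a b c r ∩ latticeOf K (Fin m ⊕ Fin n) x) := by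
    rintro v ⟨hvE, hvΛ⟩
    by_cases hvr : v ∈ Eset a b c r
    · exact Or.inr ⟨hvr, hvΛ⟩
    · exact Or.inl ⟨hvΛ, hvE, hvr⟩
  have hfin1 : (latticeOf K (Fin m ⊕ Fin n) x ∩ (Eset a b c T \ Eset a b c r)).Finite :=
    latticeOf_inter_finite x ((Eset_bounded ha hb).subset Set.diff_subset)
  have hfin2 : (Eset a b c r ∩ latticeOf K (Fin m ⊕ Fin n) x).Finite := by
    rw [Set.inter_comm]
    exact latticeOf_inter_finite x (Eset_bounded ha hb)
  have hcount : (Set.ncard (Eset a b c T ∩ latticeOf K (Fin m ⊕ Fin n) x))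
      ≤ Set.ncard (latticeOf K (Fin m ⊕ Fin n) x ∩ (Eset a b c T \ Eset a b c r)) +
        Set.ncard (Eset a b c r ∩ latticeOf K (Fin m ⊕ Fin n) x) :=
    le_trans (Set.ncard_le_ncard hsub (hfin1.union hfin2)) (Set.ncard_union_le _ _)
  have hcast : ((Set.ncard (Eset a b c T ∩ latticeOf K (Fin m ⊕ Fin n) x)) : ℝ)
      ≤ ((Set.ncard (latticeOf K (Fin m ⊕ Fin n) x ∩ (Eset a b c T \ Eset a b c r))) : ℝ) +
        ((Set.ncard (Eset a b c r ∩ latticeOf K (Fin m ⊕ Fin n) x)) : ℝ) := by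
    exact_mod_cast hcount
  linarith [h1]

end Paper
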